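/- Let n, p ≥ 2 and let A₁, …, A_p ∈ M_n(ℂ) have the same first n−1 columns. If there exists a nonzero proper subspace W of ℂⁿ with A_i W ⊆ W for all i, then the matrices A₁, …, A_p have a common eigenvalue, i.e. ⋂_{i=1}^p spec(A_i) ≠ ∅. -/

import Mathlib

open Matrix

/-- If a nonzero vector is an eigenvector of a matrix, the eigenvalue is in the spectrum. -/
lemma aux_mem_spectrum_of_eigvec {n : ℕ} (A : Matrix (Fin n) (Fin n) ℂ) (lam : ℂ)
    (v : Fin n → ℂ) (hv : v ≠ 0) (h : A.mulVec v = lam • v) : lam ∈ spectrum ℂ A := by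
  rw [spectrum.mem_iff]
  intro hu
  rw [Matrix.isUnit_iff_isUnit_det, isUnit_iff_ne_zero] at hu
  apply hu
  rw [← Matrix.exists_mulVec_eq_zero_iff]
  refine ⟨v, hv, ?_⟩
  have : (algebraMap ℂ (Matrix (Fin n) (Fin n) ℂ)) lam = lam • (1 : Matrix (Fin n) (Fin n) ℂ) := by
    rw [Algebra.algebraMap_eq_smul_one]
  rw [this, Matrix.sub_mulVec, Matrix.smul_mulVec, Matrix.one_mulVec, h, sub_self]

theorem stmt_6 (n p : ℕ) (hn : 2 ≤ n) (hp : 2 ≤ p)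
    (A : Fin p → Matrix (Fin n) (Fin n) ℂ)
    (hcols : ∀ i j : Fin p, ∀ k : Fin n, (k : ℕ) < n - 1 → ∀ r : Fin n, A i r k = A j r k)
    (W : Submodule ℂ (Fin n → ℂ)) (hW0 : W ≠ ⊥) (hW1 : W ≠ ⊤)
    (hinv : ∀ i, ∀ x ∈ W, (A i).mulVec x ∈ W) :
    ∃ lam : ℂ, ∀ i, lam ∈ spectrum ℂ (A i) := by
  set e : Fin n := ⟨n - 1, by omega⟩ with he
  have hp0 : 0 < p := by omega
  set i0 : Fin p := ⟨0, hp0⟩ with hi0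
  -- key computation: difference of the actions is supported on the last column
  have hdiff : ∀ i j : Fin p, ∀ y : Fin n → ℂ,
      (A i).mulVec y - (A j).mulVec y = (y e) • fun r => A i r e - A j r e := by
    intro i j y
    funext r
    simp only [Pi.sub_apply, Pi.smul_apply, Matrix.mulVec, dotProduct, smul_eq_mul]
    rw [← Finset.sum_sub_distrib]
    rw [Finset.sum_congr rfl (fun k _ => by ring :
        ∀ k ∈ Finset.univ, A i r k * y k - A j r k * y k = (A i r k - A j r k) * y k)]
    rw [Finset.sum_eq_single e]
    · ring
    · intro k _ hk
      have hk' : (k : ℕ) < n - 1 := by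
        have h1 : (k : ℕ) < n := k.isLt
        have h2 : (k : ℕ) ≠ n - 1 := fun hc => hk (Fin.ext hc)
        omega
      rw [hcols i j k hk' r, sub_self, zero_mul]
    · intro h; exact absurd (Finset.mem_univ e) h
  by_cases hcase : ∀ x ∈ W, x e = 0
  · -- Case 1: all matrices act identically on W
    have hagree : ∀ i : Fin p, ∀ x ∈ W, (A i).mulVec x = (A i0).mulVec x := by
      intro i x hx
      have := hdiff i i0 x
      rw [hcase x hx, zero_smul, sub_eq_zero] at this
      exact this
    haveI : Nontrivial W := Submodule.nontrivial_iff_ne_bot.mpr hW0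
    let f : W →ₗ[ℂ] W := ((A i0).mulVecLin).restrict (p := W) (q := W)
      (fun x hx => hinv i0 x hx)
    obtain ⟨lam, hlam⟩ := Module.End.exists_eigenvalue f
    obtain ⟨⟨v, hvW⟩, hv⟩ := hlam.exists_hasEigenvector
    refine ⟨lam, fun i => ?_⟩
    have hv0 : v ≠ 0 := fun h => hv.2 (Subtype.ext h)
    have hfv : (A i0).mulVec v = lam • v := by
      have := hv.1
      have h2 : (f ⟨v, hvW⟩ : Fin n → ℂ) = ((lam • ⟨v, hvW⟩ : W) : Fin n → ℂ) := by
        rw [Module.End.mem_eigenspace_iff] at this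
        rw [this]
      have h3 : (f ⟨v, hvW⟩ : Fin n → ℂ) = (A i0).mulVec v := rfl
      rw [h3] at h2
      simpa using h2
    refine aux_mem_spectrum_of_eigvec (A i) lam v hv0 ?_
    rw [hagree i v hvW, hfv]
  · -- Case 2: all matrices induce the same map on the quotient
    push_neg at hcase
    obtain ⟨x, hxW, hxe⟩ := hcase
    have hdW : ∀ i j : Fin p, ∀ y : Fin n → ℂ,
        (A i).mulVec y - (A j).mulVec y ∈ W := by
      intro i j y
      have hd : (fun r => A i r e - A j r e) ∈ W := by
        have hx2 : (A i).mulVec x - (A j).mulVec x ∈ W :=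
          W.sub_mem (hinv i x hxW) (hinv j x hxW)
        rw [hdiff i j x] at hx2
        have := W.smul_mem (x e)⁻¹ hx2
        rwa [smul_smul, inv_mul_cancel₀ hxe, one_smul] at this
      rw [hdiff i j y]
      exact W.smul_mem _ hd
    haveI : Nontrivial ((Fin n → ℂ) ⧸ W) :=
      Submodule.Quotient.nontrivial_iff.mpr hW1
    let g : Fin p → ((Fin n → ℂ) ⧸ W) →ₗ[ℂ] ((Fin n → ℂ) ⧸ W) := fun i =>
      Submodule.mapQ W W ((A i).mulVecLin) (fun x hx => hinv i x hx)
    obtain ⟨lam, hlam⟩ := Module.End.exists_eigenvalue (g i0)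
    obtain ⟨q, hq⟩ := hlam.exists_hasEigenvector
    obtain ⟨y, rfl⟩ := Submodule.Quotient.mk_surjective W q
    have hyW : y ∉ W := fun h => hq.2 ((Submodule.Quotient.mk_eq_zero W).mpr h)
    refine ⟨lam, fun i => ?_⟩
    -- the induced maps agree, so (A i) y - lam • y ∈ W
    have hgi : (A i).mulVec y - lam • y ∈ W := by
      have h0 : (g i0) (Submodule.Quotient.mk y) = lam • Submodule.Quotient.mk y := by
        have := hq.1; rwa [Module.End.mem_eigenspace_iff] at this
      have h1 : Submodule.Quotient.mk ((A i0).mulVec y)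
          = (Submodule.Quotient.mk (lam • y) : (Fin n → ℂ) ⧸ W) := by
        rw [Submodule.Quotient.mk_smul]
        rw [← h0]
        rfl
      have h2 : (A i0).mulVec y - lam • y ∈ W := (Submodule.Quotient.eq W).mp h1
      have h3 := hdW i i0 y
      have := W.add_mem h3 h2
      rwa [sub_add_sub_cancel] at this
    -- consider T = mulVecLin (A i) - lam • id
    set T : (Fin n → ℂ) →ₗ[ℂ] (Fin n → ℂ) := (A i).mulVecLin - lam • LinearMap.id with hT
    have hTW : ∀ z ∈ W, T z ∈ W := by
      intro z hz
      simpa [T] using W.sub_mem (hinv i z hz) (W.smul_mem lam hz)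
    have hTy : T y ∈ W := by simpa [T] using hgi
    have hTnotinj : ¬ Function.Injective T := by
      intro hinj
      have hle : W.map T ≤ W := by
        rintro _ ⟨z, hz, rfl⟩; exact hTW z hz
      have heq : W.map T = W := by
        apply Submodule.eq_of_le_of_finrank_eq hle
        have hsurj : Function.Surjective T :=
          (LinearMap.injective_iff_surjective).mp hinj
        let eT : (Fin n → ℂ) ≃ₗ[ℂ] (Fin n → ℂ) := LinearEquiv.ofBijective T ⟨hinj, hsurj⟩
        have : W.map (eT : (Fin n → ℂ) →ₗ[ℂ] (Fin n → ℂ)) = W.map T := rfl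
        rw [← this]
        exact LinearEquiv.finrank_map_eq eT W
      rw [← heq] at hTy
      obtain ⟨w, hwW, hwy⟩ := hTy
      exact hyW (hinj hwy ▸ hwW)
    obtain ⟨v, hv0, hv⟩ : ∃ v, v ≠ 0 ∧ T v = 0 := by
      rw [← LinearMap.ker_eq_bot] at hTnotinj
      obtain ⟨v, hvk, hv0⟩ := Submodule.exists_mem_ne_zero_of_ne_bot hTnotinj
      exact ⟨v, hv0, hvk⟩
    refine aux_mem_spectrum_of_eigvec (A i) lam v hv0 ?_
    have : (A i).mulVecLin v - lam • v = 0 := by simpa [T] using hv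
    rw [← Matrix.mulVecLin_apply, sub_eq_zero.mp this]
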